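/- Let I ⊆ K[x_1,…,x_n] be an ideal in a polynomial ring over a ring K, and let f_1,…,f_m, h_1,…,h_r ∈ K[x_1,…,x_n] with h_1 = 1, defining φ : K[y_1,…,y_m]^r → K[x_1,…,x_n]/I =: R by (g_1,…,g_r) ↦ Σ_j g_j(f_1,…,f_m)·h_j + I. Let J ⊆ K[x_1,…,x_n,y_1,…,y_m,z_2,…,z_r] be the ideal generated by I, all y_i − f_i, and all z_j − h_j. Choose a monomial ordering in which every x_i is bigger than every monomial in the y- and z-variables and such that for monomials s, t in the y- and z-variables, deg_z(s) < deg_z(t) implies s < t, and let 𝒢 be a Gröbner basis of J. Set 𝒢' := (K[y,z]_{≤1} ∩ 𝒢) ∪ {z_j·g : g ∈ K[y] ∩ 𝒢, j = 2,…,r}, where K[y,z]_{≤1} denotes polynomials of z-degree at most 1, and for g = g_1 + g_2 z_2 + … + g_r z_r with g_i ∈ K[y] write g⃗ := (g_1,…,g_r). Then ker(φ) is generated as a K[y_1,…,y_m]-module by {g⃗ : g ∈ 𝒢'}. Moreover, if z_r > z_j·t for all j < r and all monomials t in the y-variables, and if some vector of ker(φ) has last component 1, then such a vector arises as a K-linear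 combination of the g⃗ with g ∈ 𝒢'. -/

import Mathlib

open MvPolynomial
open scoped MonomialOrder
noncomputable section

namespace KernelLemma

variable {K : Type*} [CommRing K]

/-- The leading monomial of a multivariate polynomial with respect to a
monomial order (it is `0` for the zero polynomial). -/
def lm {σ : Type*} (mo : MonomialOrder σ) {S : Type*} [CommSemiring S]
    (f : MvPolynomial σ S) : σ →₀ ℕ :=
  mo.toSyn.symm (f.support.sup fun d => mo.toSyn d)

/-- The leading term of a polynomial with respect to a monomial order. -/
def lt {σ : Type*} (mo : MonomialOrder σ) {S : Type*} [CommSemiring S]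
    (f : MvPolynomial σ S) : MvPolynomial σ S :=
  monomial (lm mo f) (f.coeff (lm mo f))

/-- A Gröbner basis of an ideal of a polynomial ring over a (commutative) ring:
a finite subset of the ideal which generates it and such that the leading term
of every nonzero element of the ideal lies in the ideal generated by the leading
terms of the basis elements. -/
def IsGroebnerBasisOverRing {σ : Type*} (mo : MonomialOrder σ)
    (J : Ideal (MvPolynomial σ K)) (B : Finset (MvPolynomial σ K)) : Prop :=
  (B : Set (MvPolynomial σ K)) ⊆ J ∧
  Ideal.span (B : Set (MvPolynomial σ K)) = J ∧
  ∀ p ∈ J, p ≠ 0 → lt mo p ∈ Ideal.span ((lt mo) '' (B : Set (MvPolynomial σ K)))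

variable {n mm r : ℕ}

/-- The variables `x_1,…,x_n, y_1,…,y_m, z_2,…,z_r` (the `z`-variables are
indexed by the nonzero indices). -/
abbrev Vars (n mm r : ℕ) := Fin n ⊕ (Fin mm ⊕ {j : Fin (r + 1) // j ≠ 0})

/-- a `z`-variable -/
abbrev zv (j : {j : Fin (r + 1) // j ≠ 0}) : Vars n mm r := Sum.inr (Sum.inr j)

/-- a `y`-variable -/
abbrev yv (i : Fin mm) : Vars n mm r := Sum.inr (Sum.inl i)

/-- a monomial involving no `x`-variable -/
def OnYZ (d : Vars n mm r →₀ ℕ) : Prop := ∀ i : Fin n, d (Sum.inl i) = 0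

/-- the total degree of a monomial in the `z`-variables -/
def degz (d : Vars n mm r →₀ ℕ) : ℕ := ∑ j : {j : Fin (r + 1) // j ≠ 0}, d (zv j)

/-- embedding `K[x] → K[x,y,z]` -/
def ιx : MvPolynomial (Fin n) K →+* MvPolynomial (Vars n mm r) K :=
  (rename (Sum.inl : Fin n → Vars n mm r)).toRingHom

/-- embedding `K[y] → K[x,y,z]` -/
def ιy : MvPolynomial (Fin mm) K →+* MvPolynomial (Vars n mm r) K :=
  (rename (yv : Fin mm → Vars n mm r)).toRingHom

/-- `(g_1,…,g_r) = g⃗ ↦ g = g_1 + g_2 z_2 + ⋯ + g_r z_r` -/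
def assemble (v : Fin (r + 1) → MvPolynomial (Fin mm) K) :
    MvPolynomial (Vars n mm r) K :=
  ιy (v 0) + ∑ j : {j : Fin (r + 1) // j ≠ 0}, X (zv j) * ιy (v j.1)


/-! ### Auxiliary material -/

open Finsupp in
lemma yv_injective : Function.Injective (yv : Fin mm → Vars n mm r) := by
  intro a b h
  simpa using h

lemma zv_injective : Function.Injective (zv (n := n) (mm := mm) (r := r)) := by
  intro a b h
  simpa [Subtype.ext_iff] using h

/-- the `x,y,z`-monomial attached to `j : Fin (r+1)` and a `y`-monomial `t` -/
def embed (j : Fin (r + 1)) (t : Fin mm →₀ ℕ) : Vars n mm r →₀ ℕ :=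
  (if h : j = 0 then 0 else Finsupp.single (zv ⟨j, h⟩) 1) + t.mapDomain yv

lemma onYZ_mapDomain (t : Fin mm →₀ ℕ) : OnYZ (n := n) (r := r) (t.mapDomain yv) := by
  intro i
  apply Finsupp.mapDomain_notin_range
  rintro ⟨a, h⟩; simp at h

lemma mapDomain_yv_zv (t : Fin mm →₀ ℕ) (j : {j : Fin (r + 1) // j ≠ 0}) :
    (t.mapDomain yv : Vars n mm r →₀ ℕ) (zv j) = 0 := by
  apply Finsupp.mapDomain_notin_range
  rintro ⟨a, h⟩; simp at h

lemma degz_mapDomain (t : Fin mm →₀ ℕ) :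
    degz (n := n) (t.mapDomain (yv : Fin mm → Vars n mm r)) = 0 := by
  simp [degz, mapDomain_yv_zv]

lemma degz_single_zv (j : {j : Fin (r + 1) // j ≠ 0}) :
    degz (n := n) (mm := mm) (Finsupp.single (zv j) 1) = 1 := by
  rw [degz, Finset.sum_eq_single j]
  · simp
  · intro b _ hb
    rw [Finsupp.single_apply, if_neg (fun h => hb (zv_injective h).symm)]
  · simp

lemma degz_add (d e : Vars n mm r →₀ ℕ) : degz (d + e) = degz d + degz e := by
  simp [degz, Finset.sum_add_distrib]

lemma onYZ_add {d e : Vars n mm r →₀ ℕ} (hd : OnYZ d) (he : OnYZ e) : OnYZ (d + e) := by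
  intro i; simp [Finsupp.add_apply, hd i, he i]

lemma onYZ_embed (j : Fin (r + 1)) (t : Fin mm →₀ ℕ) : OnYZ (embed (n := n) j t) := by
  apply onYZ_add _ (onYZ_mapDomain t)
  split
  · intro i; simp
  · intro i; simp [Finsupp.single_apply]

lemma degz_embed (j : Fin (r + 1)) (t : Fin mm →₀ ℕ) :
    degz (embed (n := n) j t) = if j = 0 then 0 else 1 := by
  rw [embed, degz_add, degz_mapDomain, add_zero]
  split_ifs with h
  · simp [degz]
  · exact degz_single_zv ⟨j, h⟩

lemma embed_zero_eq (t : Fin mm →₀ ℕ) : embed (n := n) (r := r) 0 t = t.mapDomain yv := by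
  simp [embed]

lemma embed_ne_zero_eq {j : Fin (r + 1)} (h : j ≠ 0) (t : Fin mm →₀ ℕ) :
    embed (n := n) j t = Finsupp.single (zv ⟨j, h⟩) 1 + t.mapDomain yv := by
  simp [embed, h]

lemma eq_mapDomain_of {e : Vars n mm r →₀ ℕ} (h1 : OnYZ e)
    (hz : ∀ j : {j : Fin (r + 1) // j ≠ 0}, e (zv j) = 0) :
    ∃ t : Fin mm →₀ ℕ, e = t.mapDomain yv := by
  refine ⟨e.comapDomain yv (yv_injective.injOn), ?_⟩
  ext v
  rcases v with i | i | j
  · rw [h1 i, Finsupp.mapDomain_notin_range]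
    rintro ⟨a, h⟩; simp at h
  · rw [Finsupp.mapDomain_apply yv_injective]
    rfl
  · rw [hz j, mapDomain_yv_zv]

/-- every `y,z`-monomial of `z`-degree at most one has the form `embed j t` -/
lemma decompose {d : Vars n mm r →₀ ℕ} (h1 : OnYZ d) (h2 : degz d ≤ 1) :
    ∃ j t, d = embed j t := by
  by_cases hz : ∀ j : {j : Fin (r + 1) // j ≠ 0}, d (zv j) = 0
  · obtain ⟨t, ht⟩ := eq_mapDomain_of h1 hz
    exact ⟨0, t, by rw [embed_zero_eq, ht]⟩
  · push_neg at hz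
    obtain ⟨j₀, hj₀⟩ := hz
    have hdeg : degz d = ∑ j : {j : Fin (r + 1) // j ≠ 0}, d (zv j) := rfl
    have hd1 : d (zv j₀) = 1 := by
      have hle : d (zv j₀) ≤ degz d := by
        rw [hdeg]
        exact Finset.single_le_sum (f := fun j => d (zv j)) (fun _ _ => Nat.zero_le _)
          (Finset.mem_univ j₀)
      omega
    have herase : ∀ j : {j : Fin (r + 1) // j ≠ 0}, (d.erase (zv j₀)) (zv j) = 0 := by
      intro j
      by_cases hjj : j = j₀
      · subst hjj; simp [Finsupp.erase_same]
      · rw [Finsupp.erase_ne (fun h => hjj (zv_injective h))]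
        have key : d (zv j₀) + d (zv j) ≤ degz d := by
          rw [hdeg]
          have h' : d (zv j₀) + ∑ x ∈ Finset.univ.erase j₀, d (zv x)
              = ∑ j : {j : Fin (r + 1) // j ≠ 0}, d (zv j) :=
            Finset.add_sum_erase Finset.univ (fun j => d (zv j)) (Finset.mem_univ j₀)
          have h2' : d (zv j) ≤ ∑ x ∈ Finset.univ.erase j₀, d (zv x) :=
            Finset.single_le_sum (f := fun j => d (zv j)) (fun _ _ => Nat.zero_le _)
              (Finset.mem_erase.mpr ⟨hjj, Finset.mem_univ j⟩)
          omega
        omega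
    have h1' : OnYZ (d.erase (zv j₀)) := by
      intro i
      rw [Finsupp.erase_ne (by simp)]
      exact h1 i
    obtain ⟨t, ht⟩ := eq_mapDomain_of h1' herase
    refine ⟨j₀.1, t, ?_⟩
    rw [embed_ne_zero_eq j₀.2, ← ht, Subtype.coe_eta, ← hd1, Finsupp.single_add_erase]

/-! ### Coefficients of `assemble` -/

lemma assemble_def (v : Fin (r + 1) → MvPolynomial (Fin mm) K) :
    assemble (n := n) v =
      ιy (v 0) + ∑ j : {j : Fin (r + 1) // j ≠ 0}, X (zv j) * ιy (v j.1) := rfl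

lemma coeff_iotay (d : Vars n mm r →₀ ℕ) (g : MvPolynomial (Fin mm) K)
    (hd : ¬ ∃ t : Fin mm →₀ ℕ, d = t.mapDomain yv) :
    coeff d (ιy (n := n) g) = 0 := by
  apply coeff_rename_eq_zero
  intro u hu
  exact absurd ⟨u, hu.symm⟩ hd

lemma coeff_iotay_mapDomain (t : Fin mm →₀ ℕ) (g : MvPolynomial (Fin mm) K) :
    coeff (t.mapDomain yv) (ιy (n := n) (r := r) g) = coeff t g :=
  coeff_rename_mapDomain yv yv_injective g t

lemma coeff_X_zv_mul (d : Vars n mm r →₀ ℕ) (j : {j : Fin (r + 1) // j ≠ 0})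
    (p : MvPolynomial (Vars n mm r) K) (hd : d (zv j) = 0) :
    coeff d (X (zv j) * p) = 0 := by
  classical
  rw [coeff_X_mul']
  simp [Finsupp.mem_support_iff, hd]

lemma coeff_assemble (j : Fin (r + 1)) (t : Fin mm →₀ ℕ)
    (v : Fin (r + 1) → MvPolynomial (Fin mm) K) :
    coeff (embed j t) (assemble (n := n) v) = coeff t (v j) := by
  rw [assemble_def, coeff_add, coeff_sum]
  by_cases hj : j = 0
  · subst hj
    rw [embed_zero_eq, coeff_iotay_mapDomain]
    rw [Finset.sum_eq_zero, add_zero]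
    intro j' _
    exact coeff_X_zv_mul _ _ _ (mapDomain_yv_zv t j')
  · rw [embed_ne_zero_eq hj]
    rw [coeff_iotay _ _ (by
      rintro ⟨u, hu⟩
      have := congrArg (fun d => d (zv ⟨j, hj⟩)) hu
      simp [Finsupp.single_apply, mapDomain_yv_zv] at this), zero_add]
    rw [Finset.sum_eq_single ⟨j, hj⟩]
    · rw [coeff_X_mul, coeff_iotay_mapDomain]
    · intro b _ hb
      apply coeff_X_zv_mul
      rw [Finsupp.add_apply, mapDomain_yv_zv,
        Finsupp.single_apply, if_neg (fun h => hb (zv_injective h).symm)]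
    · simp

lemma coeff_assemble_eq_zero (d : Vars n mm r →₀ ℕ)
    (v : Fin (r + 1) → MvPolynomial (Fin mm) K)
    (hd : ¬ (OnYZ d ∧ degz d ≤ 1)) :
    coeff d (assemble (n := n) v) = 0 := by
  rw [assemble_def, coeff_add, coeff_sum]
  have hy : coeff d (ιy (n := n) (v 0)) = 0 := by
    apply coeff_iotay
    rintro ⟨t, rfl⟩
    exact hd ⟨onYZ_mapDomain t, by rw [degz_mapDomain]; omega⟩
  rw [hy, zero_add]
  apply Finset.sum_eq_zero
  intro j _
  by_cases hdz : d (zv j) = 0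
  · exact coeff_X_zv_mul _ _ _ hdz
  · classical
    rw [coeff_X_mul']
    rw [if_pos (Finsupp.mem_support_iff.mpr hdz)]
    apply coeff_iotay
    rintro ⟨t, ht⟩
    apply hd
    have hdeq : d = Finsupp.single (zv j) 1 + t.mapDomain yv := by
      rw [← ht]
      ext w
      rw [Finsupp.add_apply, Finsupp.single_apply]
      by_cases hw : zv j = w
      · subst hw
        rw [if_pos rfl, Finsupp.tsub_apply, Finsupp.single_apply, if_pos rfl]
        omega
      · rw [if_neg hw, Finsupp.tsub_apply, Finsupp.single_apply, if_neg hw, zero_add,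
          Nat.sub_zero]
    rw [hdeq]
    constructor
    · apply onYZ_add _ (onYZ_mapDomain t)
      intro i; simp [Finsupp.single_apply]
    · rw [degz_add, degz_mapDomain, degz_single_zv]

lemma support_assemble {d : Vars n mm r →₀ ℕ}
    {v : Fin (r + 1) → MvPolynomial (Fin mm) K}
    (hd : d ∈ (assemble (n := n) v).support) : OnYZ d ∧ degz d ≤ 1 := by
  by_contra h
  exact (MvPolynomial.mem_support_iff.mp hd) (coeff_assemble_eq_zero d v h)

/-! ### The inverse `vecp` of `assemble` -/

lemma embed_injective (j : Fin (r + 1)) : Function.Injective (embed (n := n) (mm := mm) j) := by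
  intro t t' h
  have : (embed j t : Vars n mm r →₀ ℕ) - (if h : j = 0 then 0 else Finsupp.single (zv ⟨j, h⟩) 1)
      = embed j t' - (if h : j = 0 then 0 else Finsupp.single (zv ⟨j, h⟩) 1) := by rw [h]
  rw [embed, embed, add_tsub_cancel_left, add_tsub_cancel_left] at this
  exact Finsupp.mapDomain_injective yv_injective this

/-- the vector of `K[y]`-components of a polynomial in the `y,z`-variables with
`z`-degree at most one -/
def vecp (q : MvPolynomial (Vars n mm r) K) (j : Fin (r + 1)) : MvPolynomial (Fin mm) K :=
  AddMonoidAlgebra.ofCoeff (Finsupp.comapDomain (embed j) (AddMonoidAlgebra.coeff q) ((embed_injective j).injOn))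

lemma coeff_vecp (q : MvPolynomial (Vars n mm r) K) (j : Fin (r + 1)) (t : Fin mm →₀ ℕ) :
    coeff t (vecp q j) = coeff (embed j t) q := rfl

lemma vecp_assemble (v : Fin (r + 1) → MvPolynomial (Fin mm) K) :
    vecp (assemble (n := n) v) = v := by
  funext j
  apply MvPolynomial.ext
  intro t
  rw [coeff_vecp, coeff_assemble]

lemma assemble_vecp {q : MvPolynomial (Vars n mm r) K}
    (hq : ∀ d ∈ q.support, OnYZ d ∧ degz d ≤ 1) :
    assemble (n := n) (vecp q) = q := by
  apply MvPolynomial.ext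
  intro d
  by_cases hd : OnYZ d ∧ degz d ≤ 1
  · obtain ⟨j, t, rfl⟩ := decompose hd.1 hd.2
    rw [coeff_assemble, coeff_vecp]
  · rw [coeff_assemble_eq_zero d _ hd]
    by_contra h
    exact hd (hq d (MvPolynomial.mem_support_iff.mpr (fun h' => h h'.symm)))

lemma vecp_add (p q : MvPolynomial (Vars n mm r) K) :
    vecp (p + q) = vecp p + vecp q := by
  funext j
  apply MvPolynomial.ext
  intro t
  simp only [coeff_vecp, coeff_add, Pi.add_apply]

lemma vecp_sum {α : Type*} (s : Finset α) (F : α → MvPolynomial (Vars n mm r) K) :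
    vecp (∑ a ∈ s, F a) = ∑ a ∈ s, vecp (F a) := by
  funext j
  apply MvPolynomial.ext
  intro t
  rw [coeff_vecp, coeff_sum]
  rw [Finset.sum_apply]
  rw [Finset.sum_congr rfl (fun a _ => (coeff_vecp (F a) j t).symm)]
  rw [MvPolynomial.coeff_sum]

/-! ### `assemble` is linear -/

lemma assemble_add (v w : Fin (r + 1) → MvPolynomial (Fin mm) K) :
    assemble (n := n) (v + w) = assemble v + assemble w := by
  simp only [assemble_def, Pi.add_apply, map_add]
  rw [Finset.sum_congr rfl (fun j _ => by rw [mul_add])]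
  rw [Finset.sum_add_distrib]
  ring

lemma assemble_zero : assemble (n := n) (0 : Fin (r + 1) → MvPolynomial (Fin mm) K) = 0 := by
  simp [assemble_def]

lemma assemble_smul (g : MvPolynomial (Fin mm) K)
    (v : Fin (r + 1) → MvPolynomial (Fin mm) K) :
    assemble (n := n) (g • v) = ιy g * assemble v := by
  simp only [assemble_def, Pi.smul_apply, smul_eq_mul, map_mul]
  rw [mul_add, Finset.mul_sum]
  congr 1
  apply Finset.sum_congr rfl
  intro j _
  ring

lemma assemble_smulK (c : K) (v : Fin (r + 1) → MvPolynomial (Fin mm) K) :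
    assemble (n := n) (c • v) = c • assemble v := by
  have h1 : c • v = (C c : MvPolynomial (Fin mm) K) • v := by
    funext j
    rw [Pi.smul_apply, Pi.smul_apply, smul_eq_mul, ← MvPolynomial.smul_eq_C_mul]
  rw [h1, assemble_smul, MvPolynomial.smul_eq_C_mul]
  congr 1
  exact rename_C _ c

/-! ### Leading monomials -/

section LM

variable {σ S : Type*} (mo : MonomialOrder σ) [CommSemiring S]

lemma toSyn_lm (f : MvPolynomial σ S) :
    mo.toSyn (lm mo f) = f.support.sup (fun d => mo.toSyn d) := by
  rw [lm, AddEquiv.apply_symm_apply]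

lemma lm_mem_support {f : MvPolynomial σ S} (hf : f ≠ 0) : lm mo f ∈ f.support := by
  obtain ⟨b, hb, hb2⟩ := Finset.exists_mem_eq_sup f.support
    (MvPolynomial.support_nonempty.mpr hf) (fun d => mo.toSyn d)
  have : lm mo f = b := by rw [lm, hb2, AddEquiv.symm_apply_apply]
  rwa [this]

lemma le_lm {f : MvPolynomial σ S} {d : σ →₀ ℕ} (hd : d ∈ f.support) :
    d ≼[mo] lm mo f := by
  rw [toSyn_lm]
  exact Finset.le_sup hd

lemma lm_eq_of_forall {f : MvPolynomial σ S} {d : σ →₀ ℕ} (hd : d ∈ f.support)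
    (h : ∀ e ∈ f.support, e ≼[mo] d) : lm mo f = d := by
  apply mo.toSyn.injective
  exact le_antisymm (by rw [toSyn_lm]; exact Finset.sup_le h) (le_lm mo hd)

lemma coeff_lm_ne_zero {f : MvPolynomial σ S} (hf : f ≠ 0) :
    coeff (lm mo f) f ≠ 0 :=
  MvPolynomial.mem_support_iff.mp (lm_mem_support mo hf)

lemma eq_zero_of_syn_le_zero {d : σ →₀ ℕ} (h : mo.toSyn d ≤ 0) : d = 0 := by
  have : mo.toSyn d = 0 := le_antisymm h (by rw [← mo.bot_eq_zero]; exact bot_le)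
  have h0 : mo.toSyn 0 = 0 := map_zero mo.toSyn
  exact mo.toSyn.injective (by rw [this, h0])

end LM

lemma finsupp_le_single {σ : Type*} {d : σ →₀ ℕ} {s : σ} (h : d ≤ Finsupp.single s 1) :
    d = 0 ∨ d = Finsupp.single s 1 := by
  classical
  by_cases hs : d s = 0
  · left
    ext w
    by_cases hw : w = s
    · subst hw; exact hs
    · have := h w
      rwa [Finsupp.single_apply, if_neg (fun hh => hw hh.symm), Nat.le_zero] at this
  · right
    ext w
    by_cases hw : w = s
    · subst hw
      have := h w
      rw [Finsupp.single_apply, if_pos rfl] at this ⊢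
      omega
    · have := h w
      rw [Finsupp.single_apply, if_neg (fun hh => hw hh.symm), Nat.le_zero] at this
      rw [this, Finsupp.single_apply, if_neg (fun hh => hw hh.symm)]

/-! ### The substitution homomorphism `ψ` -/

section Psi

variable (fp : Fin mm → MvPolynomial (Fin n) K) (hp : Fin (r + 1) → MvPolynomial (Fin n) K)

/-- substitution `x ↦ x`, `y ↦ f`, `z ↦ h` -/
def psi : MvPolynomial (Vars n mm r) K →ₐ[K] MvPolynomial (Fin n) K :=
  aeval (Sum.elim X (Sum.elim fp (fun j => hp j.1)))

lemma psi_iotax (q : MvPolynomial (Fin n) K) : psi fp hp (ιx (mm := mm) (r := r) q) = q := by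
  rw [ιx, psi]
  show aeval _ (rename Sum.inl q) = q
  rw [aeval_rename]
  have : (Sum.elim X (Sum.elim fp (fun j : {j : Fin (r+1) // j ≠ 0} => hp j.1)))
      ∘ (Sum.inl : Fin n → Vars n mm r) = X := rfl
  rw [this]
  exact aeval_X_left_apply q

lemma psi_iotay (g : MvPolynomial (Fin mm) K) :
    psi fp hp (ιy (n := n) (r := r) g) = eval₂ C fp g := by
  rw [ιy, psi]
  show aeval _ (rename yv g) = _
  rw [aeval_rename]
  have : (Sum.elim X (Sum.elim fp (fun j : {j : Fin (r+1) // j ≠ 0} => hp j.1)))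
      ∘ (yv : Fin mm → Vars n mm r) = fp := rfl
  rw [this, aeval_def]
  rfl

lemma psi_X_zv (j : {j : Fin (r + 1) // j ≠ 0}) :
    psi (n := n) fp hp (X (zv j)) = hp j.1 := by
  rw [psi, aeval_X]
  rfl

lemma psi_assemble (hp0 : hp 0 = 1) (v : Fin (r + 1) → MvPolynomial (Fin mm) K) :
    psi fp hp (assemble (n := n) v) = ∑ j, eval₂ C fp (v j) * hp j := by
  rw [assemble_def, map_add, map_sum, psi_iotay]
  have hsplit : ∑ j, eval₂ C fp (v j) * hp j
      = eval₂ C fp (v 0) * hp 0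
        + ∑ j : {j : Fin (r + 1) // j ≠ 0}, eval₂ C fp (v j.1) * hp j.1 := by
    rw [← Finset.add_sum_erase Finset.univ _ (Finset.mem_univ 0)]
    congr 1
    rw [← Finset.sum_subtype (Finset.univ.erase 0)
      (fun j => by simp [Finset.mem_erase]) (fun j => eval₂ C fp (v j) * hp j)]
  rw [hsplit, hp0, mul_one]
  congr 1
  apply Finset.sum_congr rfl
  intro j _
  rw [map_mul, psi_X_zv, psi_iotay, mul_comm]

variable {I : Ideal (MvPolynomial (Fin n) K)} {J : Ideal (MvPolynomial (Vars n mm r) K)}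

lemma mem_J_iff
    (hJ : J = Ideal.span (((ιx : MvPolynomial (Fin n) K →+*
          MvPolynomial (Vars n mm r) K) '' I) ∪
        Set.range (fun i : Fin mm => X (yv i) - ιx (fp i)) ∪
        Set.range (fun j : {j : Fin (r + 1) // j ≠ 0} => X (zv j) - ιx (hp j.1))))
    (p : MvPolynomial (Vars n mm r) K) :
    p ∈ J ↔ psi fp hp p ∈ I := by
  constructor
  · intro hp'
    rw [hJ] at hp'
    have hle : Ideal.span (((ιx : MvPolynomial (Fin n) K →+*
          MvPolynomial (Vars n mm r) K) '' I) ∪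
        Set.range (fun i : Fin mm => X (yv i) - ιx (fp i)) ∪
        Set.range (fun j : {j : Fin (r + 1) // j ≠ 0} => X (zv j) - ιx (hp j.1)))
        ≤ Ideal.comap (psi fp hp : MvPolynomial (Vars n mm r) K →+* MvPolynomial (Fin n) K) I := by
      rw [Ideal.span_le]
      rintro q hq
      rcases hq with (⟨q', hq', rfl⟩ | ⟨i, rfl⟩) | ⟨j, rfl⟩ <;>
          simp only [SetLike.mem_coe, Ideal.mem_comap, RingHom.coe_coe, map_sub]
      · rw [psi_iotax]; exact hq'
      · have h2 : psi (n := n) fp hp (X (yv i)) = fp i := by rw [psi, aeval_X]; rfl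
        rw [h2, psi_iotax, sub_self]
        exact I.zero_mem
      · rw [psi_X_zv, psi_iotax, sub_self]
        exact I.zero_mem
    exact hle hp'
  · intro hI
    have h1 : ιx (psi fp hp p) ∈ J := by
      rw [hJ]
      exact Ideal.subset_span (Or.inl (Or.inl ⟨psi fp hp p, hI, rfl⟩))
    have h2 : p - ιx (psi fp hp p) ∈ J := by
      set J' : Ideal (MvPolynomial (Vars n mm r) K) := Ideal.span
        (Set.range (fun i : Fin mm => X (yv i) - ιx (fp i)) ∪
         Set.range (fun j : {j : Fin (r + 1) // j ≠ 0} => X (zv j) - ιx (hp j.1))) with hJ'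
      have hJ'le : J' ≤ J := by
        rw [hJ, hJ']
        apply Ideal.span_mono
        intro q hq
        rcases hq with h | h
        · exact Or.inl (Or.inr h)
        · exact Or.inr h
      apply hJ'le
      have key : (Ideal.Quotient.mkₐ K J').comp (AlgHom.id K _)
          = (Ideal.Quotient.mkₐ K J').comp
            ((rename (Sum.inl : Fin n → Vars n mm r)).comp (psi fp hp)) := by
        apply MvPolynomial.algHom_ext
        intro v
        rw [AlgHom.comp_apply, AlgHom.comp_apply, AlgHom.comp_apply, AlgHom.id_apply]
        rcases v with i | i | j
        · rw [psi, aeval_X, Sum.elim_inl, rename_X]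
        · rw [psi, aeval_X, Sum.elim_inr, Sum.elim_inl]
          rw [Ideal.Quotient.mkₐ_eq_mk, Ideal.Quotient.eq]
          exact Ideal.subset_span (Or.inl ⟨i, rfl⟩)
        · rw [psi, aeval_X, Sum.elim_inr, Sum.elim_inr]
          rw [Ideal.Quotient.mkₐ_eq_mk, Ideal.Quotient.eq]
          exact Ideal.subset_span (Or.inr ⟨j, rfl⟩)
      have hkey := AlgHom.congr_fun key p
      rw [AlgHom.comp_apply, AlgHom.comp_apply, AlgHom.comp_apply, AlgHom.id_apply,
        Ideal.Quotient.mkₐ_eq_mk] at hkey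
      exact Ideal.Quotient.eq.mp hkey
    have := J.add_mem h2 h1
    rwa [sub_add_cancel] at this

end Psi

/-! ### Support of polynomials with `y,z`-leading monomial -/

section Main

variable (mo : MonomialOrder (Vars n mm r))

lemma support_cond
    (hmo₁ : ∀ (i : Fin n) (d : Vars n mm r →₀ ℕ), OnYZ d →
      d ≺[mo] Finsupp.single (Sum.inl i : Vars n mm r) 1)
    (hmo₂ : ∀ d e : Vars n mm r →₀ ℕ, OnYZ d → OnYZ e → degz d < degz e →
      d ≺[mo] e)
    {g : MvPolynomial (Vars n mm r) K} (hOn : OnYZ (lm mo g))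
    {d : Vars n mm r →₀ ℕ} (hd : d ∈ g.support) :
    OnYZ d ∧ degz d ≤ degz (lm mo g) := by
  have hle := le_lm mo hd
  have hOnd : OnYZ d := by
    by_contra h
    rw [OnYZ] at h
    push_neg at h
    obtain ⟨i, hi⟩ := h
    have h1 : Finsupp.single (Sum.inl i : Vars n mm r) 1 ≤ d := by
      rw [Finsupp.single_le_iff]
      omega
    have h2 := mo.toSyn_monotone h1
    have h3 := hmo₁ i (lm mo g) hOn
    exact absurd hle (by push_neg; exact lt_of_lt_of_le h3 h2)
  refine ⟨hOnd, ?_⟩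
  by_contra h
  push_neg at h
  exact absurd hle (by push_neg; exact hmo₂ _ _ hOn hOnd h)

lemma eq_C_of_lm_eq_zero {g : MvPolynomial (Vars n mm r) K} (hg : lm mo g = 0) :
    g = C (coeff 0 g) := by
  apply MvPolynomial.ext
  intro d
  by_cases hd : d = 0
  · subst hd; rw [coeff_C, if_pos rfl]
  · rw [coeff_C, if_neg (fun h => hd h.symm)]
    by_contra h
    have := le_lm mo (MvPolynomial.mem_support_iff.mpr h)
    rw [hg, map_zero] at this
    exact hd (eq_zero_of_syn_le_zero mo this)

lemma vecp_zero : vecp (0 : MvPolynomial (Vars n mm r) K) = 0 := by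
  funext j
  apply MvPolynomial.ext
  intro t
  rw [coeff_vecp]
  simp

end Main

lemma iotay_apply (g : MvPolynomial (Fin mm) K) :
    (ιy (n := n) (r := r) g : MvPolynomial (Vars n mm r) K) = rename yv g := rfl

lemma coeff_mul_lt {σ S : Type*} [CommSemiring S] (mo : MonomialOrder σ)
    (a g : MvPolynomial σ S) (e : σ →₀ ℕ) :
    coeff e (a * lt mo g) =
      if lm mo g ≤ e then coeff (e - lm mo g) a * coeff (lm mo g) g else 0 := by
  rw [lt, coeff_mul_monomial']

lemma assemble_sum {α : Type*} (s : Finset α)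
    (F : α → (Fin (r + 1) → MvPolynomial (Fin mm) K)) :
    assemble (n := n) (∑ a ∈ s, F a) = ∑ a ∈ s, assemble (F a) := by
  classical
  induction s using Finset.cons_induction with
  | empty => simp [assemble_zero]
  | cons a s ha ih => rw [Finset.sum_cons, Finset.sum_cons, assemble_add, ih]
/-- **kernel of a presentation map.** -/
theorem statement8
    (I : Ideal (MvPolynomial (Fin n) K))
    (fp : Fin mm → MvPolynomial (Fin n) K)
    (hp : Fin (r + 1) → MvPolynomial (Fin n) K)
    (hp0 : hp 0 = 1)
    -- the map φ : K[y]^r → K[x]/I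
    (φ : (Fin (r + 1) → MvPolynomial (Fin mm) K) → MvPolynomial (Fin n) K ⧸ I)
    (hφ : ∀ v, φ v = Ideal.Quotient.mk I (∑ j, eval₂ C fp (v j) * hp j))
    -- the ideal J generated by I, the y_i − f_i and the z_j − h_j
    (J : Ideal (MvPolynomial (Vars n mm r) K))
    (hJ : J = Ideal.span (((ιx : MvPolynomial (Fin n) K →+*
          MvPolynomial (Vars n mm r) K) '' I) ∪
        Set.range (fun i : Fin mm => X (yv i) - ιx (fp i)) ∪
        Set.range (fun j : {j : Fin (r + 1) // j ≠ 0} => X (zv j) - ιx (hp j.1))))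
    -- the monomial ordering
    (mo : MonomialOrder (Vars n mm r))
    (hmo₁ : ∀ (i : Fin n) (d : Vars n mm r →₀ ℕ), OnYZ d →
      d ≺[mo] Finsupp.single (Sum.inl i : Vars n mm r) 1)
    (hmo₂ : ∀ d e : Vars n mm r →₀ ℕ, OnYZ d → OnYZ e → degz d < degz e →
      d ≺[mo] e)
    -- a Gröbner basis 𝒢 of J and the derived set 𝒢'
    (B : Finset (MvPolynomial (Vars n mm r) K))
    (hB : IsGroebnerBasisOverRing mo J B)
    (B' : Set (MvPolynomial (Vars n mm r) K))
    (hB' : B' = {g | g ∈ B ∧ (∀ d ∈ g.support, OnYZ d ∧ degz d ≤ 1)} ∪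
      {p | ∃ g ∈ B, (∀ d ∈ g.support, OnYZ d ∧ degz d = 0) ∧
        ∃ j : {j : Fin (r + 1) // j ≠ 0}, p = X (zv j) * g}) :
    -- ker φ is generated as a K[y]-module by the vectors of elements of 𝒢'
    {v : Fin (r + 1) → MvPolynomial (Fin mm) K | φ v = 0} =
      (Submodule.span (MvPolynomial (Fin mm) K)
        {v : Fin (r + 1) → MvPolynomial (Fin mm) K |
          assemble (n := n) v ∈ B'} : Set _) ∧
    -- and, under the extra ordering assumption, a kernel vector with last
    -- component 1 can be found among the K-linear combinations
    (∀ jr : {j : Fin (r + 1) // j ≠ 0},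
      (∀ j : {j : Fin (r + 1) // j ≠ 0}, j ≠ jr →
        ∀ t : Vars n mm r →₀ ℕ, OnYZ t → degz t = 0 →
          Finsupp.single (zv j) 1 + t ≺[mo] Finsupp.single (zv jr) 1) →
      (∃ v, φ v = 0 ∧ v jr.1 = 1) →
      ∃ v ∈ Submodule.span K
          {v : Fin (r + 1) → MvPolynomial (Fin mm) K | assemble (n := n) v ∈ B'},
        φ v = 0 ∧ v jr.1 = 1) := by
  classical
  obtain ⟨hB1, hB2, hB3⟩ := hB
  -- membership in `J` measures the kernel
  have hker : ∀ v : Fin (r + 1) → MvPolynomial (Fin mm) K,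
      φ v = 0 ↔ assemble (n := n) v ∈ J := by
    intro v
    rw [hφ, Ideal.Quotient.eq_zero_iff_mem, mem_J_iff fp hp hJ, psi_assemble fp hp hp0]
  -- elements of `B'` lie in `J`
  have hB'J : ∀ p ∈ B', p ∈ J := by
    intro p hpmem
    rw [hB'] at hpmem
    rcases hpmem with ⟨hpB, -⟩ | ⟨g, hgB, -, j, rfl⟩
    · exact hB1 hpB
    · exact J.mul_mem_left _ (hB1 hgB)
  -- anything in the span of the vectors of `B'` is in the kernel
  have hspan_le : ∀ v, v ∈ Submodule.span (MvPolynomial (Fin mm) K)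
      {v : Fin (r + 1) → MvPolynomial (Fin mm) K | assemble (n := n) v ∈ B'} →
      assemble (n := n) v ∈ J := by
    intro v hv
    let N : Submodule (MvPolynomial (Fin mm) K) (Fin (r + 1) → MvPolynomial (Fin mm) K) :=
      { carrier := {w | assemble (n := n) w ∈ J}
        add_mem' := fun {a b} ha hb => by
          simp only [Set.mem_setOf_eq] at *
          rw [assemble_add]; exact J.add_mem ha hb
        zero_mem' := by
          simp only [Set.mem_setOf_eq, assemble_zero]; exact J.zero_mem
        smul_mem' := fun g w hw => by
          simp only [Set.mem_setOf_eq] at *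
          rw [assemble_smul]; exact J.mul_mem_left _ hw }
    have hle : Submodule.span (MvPolynomial (Fin mm) K)
        {v : Fin (r + 1) → MvPolynomial (Fin mm) K | assemble (n := n) v ∈ B'} ≤ N :=
      Submodule.span_le.mpr (fun w hw => hB'J _ hw)
    exact hle hv
  -- the main reduction argument
  have main : ∀ s : mo.syn, ∀ q : MvPolynomial (Vars n mm r) K,
      mo.toSyn (lm mo q) = s → q ∈ J → (∀ d ∈ q.support, OnYZ d ∧ degz d ≤ 1) →
      vecp q ∈ Submodule.span (MvPolynomial (Fin mm) K)
        {v : Fin (r + 1) → MvPolynomial (Fin mm) K | assemble (n := n) v ∈ B'} := by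
    intro s
    induction s using WellFoundedLT.induction with
    | _ s IH =>
      intro q hs hqJ hqsupp
      by_cases hq0 : q = 0
      · subst hq0; rw [vecp_zero]; exact Submodule.zero_mem _
      have hlmqmem := lm_mem_support mo hq0
      obtain ⟨hlmOn, hlmdeg⟩ := hqsupp _ hlmqmem
      obtain ⟨c, hcsupp, hcsum⟩ := Submodule.mem_span_set.mp (hB3 q hqJ hq0)
      have hex : ∀ f ∈ c.support, ∃ g', g' ∈ B ∧ lt mo g' = f := by
        intro f hf
        obtain ⟨g', hg', hgf⟩ := hcsupp hf
        exact ⟨g', hg', hgf⟩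
      choose g hgB hglt using hex
      -- the correction polynomial
      set Q : MvPolynomial (Vars n mm r) K :=
        ∑ f ∈ c.support.attach,
          if lm mo (g f.1 f.2) ≤ lm mo q then
            (coeff (lm mo q - lm mo (g f.1 f.2)) (c f.1)) •
              ((monomial (lm mo q - lm mo (g f.1 f.2)) (1 : K)) * g f.1 f.2)
          else 0 with hQdef
      have hcoeffQ : ∀ e : Vars n mm r →₀ ℕ, coeff e Q =
          ∑ f ∈ c.support.attach,
            if lm mo (g f.1 f.2) ≤ lm mo q then
              (coeff (lm mo q - lm mo (g f.1 f.2)) (c f.1)) *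
                coeff e ((monomial (lm mo q - lm mo (g f.1 f.2)) (1 : K)) * g f.1 f.2)
            else 0 := by
        intro e
        rw [hQdef, coeff_sum]
        apply Finset.sum_congr rfl
        intro f _
        split_ifs
        · rw [coeff_smul, smul_eq_mul]
        · rw [coeff_zero]
      -- the correction matches the leading coefficient
      have hc1 : coeff (lm mo q) Q = coeff (lm mo q) q := by
        have e0 : coeff (lm mo q) q = coeff (lm mo q) (c.sum fun mi r' => r' • mi) := by
          rw [hcsum, lt, coeff_monomial, if_pos rfl]
        rw [hcoeffQ, e0, Finsupp.sum, coeff_sum,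
          ← Finset.sum_attach c.support (fun f => coeff (lm mo q) ((c f) • f))]
        apply Finset.sum_congr rfl
        intro f _
        have e1 : coeff (lm mo q) ((c f.1) • f.1)
            = coeff (lm mo q) ((c f.1) * lt mo (g f.1 f.2)) := by
          rw [smul_eq_mul, hglt]
        rw [e1, coeff_mul_lt]
        split_ifs with h
        · rw [coeff_monomial_mul', if_pos tsub_le_self, tsub_tsub_cancel_of_le h, one_mul]
        · rfl
      -- monomials of the correction
      have hQsupp : ∀ d ∈ Q.support, (d ≼[mo] lm mo q) ∧ OnYZ d ∧ degz d ≤ 1 := by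
        intro d hd
        have hne := MvPolynomial.mem_support_iff.mp hd
        rw [hcoeffQ] at hne
        obtain ⟨f, -, hf⟩ := Finset.exists_ne_zero_of_sum_ne_zero hne
        rw [ne_eq, ite_eq_right_iff, Classical.not_imp] at hf
        obtain ⟨h, hf⟩ := hf
        have hf2 : coeff d ((monomial (lm mo q - lm mo (g f.1 f.2)) (1 : K)) * g f.1 f.2) ≠ 0 :=
          right_ne_zero_of_mul hf
        rw [coeff_monomial_mul'] at hf2
        rw [ne_eq, ite_eq_right_iff, Classical.not_imp] at hf2
        obtain ⟨hδd, hf2⟩ := hf2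
        rw [one_mul] at hf2
        have hd'mem : d - (lm mo q - lm mo (g f.1 f.2)) ∈ (g f.1 f.2).support :=
          MvPolynomial.mem_support_iff.mpr hf2
        have hOnlm : OnYZ (lm mo (g f.1 f.2)) := by
          intro i
          have := h (Sum.inl i)
          have h2 := hlmOn i
          omega
        obtain ⟨hOnd', hdegd'⟩ := support_cond mo hmo₁ hmo₂ hOnlm hd'mem
        have hδOn : OnYZ (lm mo q - lm mo (g f.1 f.2)) := by
          intro i
          rw [Finsupp.tsub_apply, hlmOn i]
          omega
        have hδsum : (lm mo q - lm mo (g f.1 f.2)) + lm mo (g f.1 f.2) = lm mo q :=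
          tsub_add_cancel_of_le h
        have hdd : d = (lm mo q - lm mo (g f.1 f.2)) + (d - (lm mo q - lm mo (g f.1 f.2))) := by
          rw [add_comm, tsub_add_cancel_of_le hδd]
        refine ⟨?_, ?_, ?_⟩
        · rw [hdd, map_add]
          calc mo.toSyn (lm mo q - lm mo (g f.1 f.2)) + mo.toSyn (d - (lm mo q - lm mo (g f.1 f.2)))
              ≤ mo.toSyn (lm mo q - lm mo (g f.1 f.2)) + mo.toSyn (lm mo (g f.1 f.2)) := by
                exact add_le_add le_rfl (le_lm mo hd'mem)
            _ = mo.toSyn ((lm mo q - lm mo (g f.1 f.2)) + lm mo (g f.1 f.2)) := (map_add _ _ _).symm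
            _ = mo.toSyn (lm mo q) := by rw [hδsum]
        · rw [hdd]; exact onYZ_add hδOn hOnd'
        · rw [hdd, degz_add]
          have hdegsum : degz (lm mo q - lm mo (g f.1 f.2)) + degz (lm mo (g f.1 f.2))
              = degz (lm mo q) := by rw [← degz_add, hδsum]
          omega
      -- the correction is in the ideal
      have hQJ : Q ∈ J := by
        rw [hQdef]
        apply Ideal.sum_mem
        intro f _
        split_ifs
        · rw [smul_eq_C_mul]
          exact J.mul_mem_left _ (J.mul_mem_left _ (hB1 (hgB f.1 f.2)))
        · exact J.zero_mem
      -- the vector of the correction is in the span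
      have hQvec : vecp Q ∈ Submodule.span (MvPolynomial (Fin mm) K)
          {v : Fin (r + 1) → MvPolynomial (Fin mm) K | assemble (n := n) v ∈ B'} := by
        rw [hQdef, vecp_sum]
        apply Submodule.sum_mem
        intro f _
        by_cases h : lm mo (g f.1 f.2) ≤ lm mo q
        · rw [if_pos h]
          have hOnlm : OnYZ (lm mo (g f.1 f.2)) := by
            intro i
            have h1 := h (Sum.inl i)
            have h2 := hlmOn i
            omega
          have hgfsupp : ∀ d ∈ (g f.1 f.2).support, OnYZ d ∧ degz d ≤ degz (lm mo (g f.1 f.2)) :=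
            fun d hd => support_cond mo hmo₁ hmo₂ hOnlm hd
          have hδOn : OnYZ (lm mo q - lm mo (g f.1 f.2)) := by
            intro i
            rw [Finsupp.tsub_apply, hlmOn i]
            omega
          have hδsum : degz (lm mo q - lm mo (g f.1 f.2)) + degz (lm mo (g f.1 f.2))
              = degz (lm mo q) := by
            rw [← degz_add, tsub_add_cancel_of_le h]
          obtain ⟨j, t₀, hδeq⟩ := decompose hδOn (by omega)
          have hsupple1 : ∀ d ∈ (g f.1 f.2).support, OnYZ d ∧ degz d ≤ 1 := by
            intro d hd
            obtain ⟨h1, h2⟩ := hgfsupp d hd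
            exact ⟨h1, by omega⟩
          by_cases hj : j = 0
          · subst hj
            rw [embed_zero_eq] at hδeq
            have hmon : (monomial (lm mo q - lm mo (g f.1 f.2)) (1 : K)
                : MvPolynomial (Vars n mm r) K) = ιy (monomial t₀ 1) := by
              rw [hδeq, iotay_apply]
              exact (rename_monomial _ _ _).symm
            have hgfB' : g f.1 f.2 ∈ B' := by
              rw [hB']
              exact Or.inl ⟨hgB f.1 f.2, hsupple1⟩
            have hav : assemble (n := n) (vecp (g f.1 f.2)) = g f.1 f.2 :=
              assemble_vecp hsupple1
            have hterm : coeff (lm mo q - lm mo (g f.1 f.2)) (c f.1) •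
                ((monomial (lm mo q - lm mo (g f.1 f.2)) (1:K)) * g f.1 f.2)
                = assemble (n := n) ((C (coeff (lm mo q - lm mo (g f.1 f.2)) (c f.1))
                    * monomial t₀ 1) • vecp (g f.1 f.2)) := by
              rw [assemble_smul, hav, smul_eq_C_mul, hmon, map_mul]
              rw [show (ιy (C (coeff (lm mo q - lm mo (g f.1 f.2)) (c f.1))
                  : MvPolynomial (Fin mm) K) : MvPolynomial (Vars n mm r) K)
                = C (coeff (lm mo q - lm mo (g f.1 f.2)) (c f.1)) from rename_C _ _]
              ring
            rw [hterm, vecp_assemble]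
            exact Submodule.smul_mem _ _ (Submodule.subset_span (by
              rw [Set.mem_setOf_eq, hav]; exact hgfB'))
          · rw [embed_ne_zero_eq hj] at hδeq
            have hdegδ : degz (lm mo q - lm mo (g f.1 f.2)) = 1 := by
              rw [hδeq, degz_add, degz_single_zv, degz_mapDomain]
            have hsupp0 : ∀ d ∈ (g f.1 f.2).support, OnYZ d ∧ degz d = 0 := by
              intro d hd
              obtain ⟨h1, h2⟩ := hgfsupp d hd
              exact ⟨h1, by omega⟩
            have hG'B' : X (zv ⟨j, hj⟩) * g f.1 f.2 ∈ B' := by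
              rw [hB']
              exact Or.inr ⟨g f.1 f.2, hgB f.1 f.2, hsupp0, ⟨j, hj⟩, rfl⟩
            have hsuppG' : ∀ d ∈ (X (zv ⟨j, hj⟩) * g f.1 f.2).support,
                OnYZ d ∧ degz d ≤ 1 := by
              intro d hd
              rw [support_X_mul] at hd
              obtain ⟨d', hd', rfl⟩ := Finset.mem_map.mp hd
              obtain ⟨h1, h2⟩ := hsupp0 d' hd'
              constructor
              · show OnYZ (Finsupp.single (zv ⟨j, hj⟩) 1 + d')
                exact onYZ_add (fun i => by simp [Finsupp.single_apply]) h1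
              · show degz (Finsupp.single (zv ⟨j, hj⟩) 1 + d') ≤ 1
                rw [degz_add, degz_single_zv, h2]
            have hav : assemble (n := n) (vecp (X (zv ⟨j, hj⟩) * g f.1 f.2))
                = X (zv ⟨j, hj⟩) * g f.1 f.2 := assemble_vecp hsuppG'
            have hmon : (monomial (lm mo q - lm mo (g f.1 f.2)) (1 : K)
                : MvPolynomial (Vars n mm r) K) = X (zv ⟨j, hj⟩) * ιy (monomial t₀ 1) := by
              rw [hδeq, iotay_apply]
              rw [show rename (yv : Fin mm → Vars n mm r) (monomial t₀ (1:K))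
                = monomial (t₀.mapDomain yv) 1 from rename_monomial _ _ _]
              rw [show (X (zv ⟨j, hj⟩) : MvPolynomial (Vars n mm r) K)
                = monomial (Finsupp.single (zv ⟨j, hj⟩) 1) 1 from rfl]
              rw [monomial_mul, one_mul]
            have hterm : coeff (lm mo q - lm mo (g f.1 f.2)) (c f.1) •
                ((monomial (lm mo q - lm mo (g f.1 f.2)) (1:K)) * g f.1 f.2)
                = assemble (n := n) ((C (coeff (lm mo q - lm mo (g f.1 f.2)) (c f.1))
                    * monomial t₀ 1) • vecp (X (zv ⟨j, hj⟩) * g f.1 f.2)) := by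
              rw [assemble_smul, hav, smul_eq_C_mul, hmon, map_mul]
              rw [show (ιy (C (coeff (lm mo q - lm mo (g f.1 f.2)) (c f.1))
                  : MvPolynomial (Fin mm) K) : MvPolynomial (Vars n mm r) K)
                = C (coeff (lm mo q - lm mo (g f.1 f.2)) (c f.1)) from rename_C _ _]
              ring
            rw [hterm, vecp_assemble]
            exact Submodule.smul_mem _ _ (Submodule.subset_span (by
              rw [Set.mem_setOf_eq, hav]; exact hG'B'))
        · rw [if_neg h, vecp_zero]
          exact Submodule.zero_mem _
      -- conclude by well-founded induction
      have hq'J : q - Q ∈ J := J.sub_mem hqJ hQJ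
      have hq'supp : ∀ d ∈ (q - Q).support, OnYZ d ∧ degz d ≤ 1 := by
        intro d hd
        rcases Finset.mem_union.mp (MvPolynomial.support_sub _ q Q hd) with h | h
        · exact hqsupp d h
        · exact (hQsupp d h).2
      have hvq : vecp q = vecp Q + vecp (q - Q) := by
        rw [← vecp_add]
        congr 1
        ring
      rw [hvq]
      apply Submodule.add_mem _ hQvec
      by_cases hq'0 : q - Q = 0
      · rw [hq'0, vecp_zero]; exact Submodule.zero_mem _
      have hlt : mo.toSyn (lm mo (q - Q)) < s := by
        rw [← hs]
        have hmem := lm_mem_support mo hq'0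
        have hne : lm mo (q - Q) ≠ lm mo q := by
          intro hEq
          apply coeff_lm_ne_zero mo hq'0
          rw [hEq, MvPolynomial.coeff_sub, hc1, sub_self]
        have hle' : (lm mo (q - Q)) ≼[mo] lm mo q := by
          rcases Finset.mem_union.mp (MvPolynomial.support_sub _ q Q hmem) with h | h
          · exact le_lm mo h
          · exact (hQsupp _ h).1
        exact lt_of_le_of_ne hle' (fun hEq => hne (mo.toSyn.injective hEq))
      exact IH _ hlt (q - Q) rfl hq'J hq'supp
  constructor
  · -- part 1
    ext v
    simp only [Set.mem_setOf_eq, SetLike.mem_coe]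
    constructor
    · intro hv
      have hvJ := (hker v).mp hv
      have h2 := main (mo.toSyn (lm mo (assemble (n := n) v))) (assemble (n := n) v) rfl hvJ
        (fun d hd => support_assemble hd)
      rwa [vecp_assemble] at h2
    · intro hv
      exact (hker v).mpr (hspan_le v hv)
  · -- part 2
    rintro jr hjr ⟨v₀, hv₀, hv₀jr⟩
    by_cases htriv : (1 : K) = 0
    · haveI : Subsingleton K := subsingleton_of_zero_eq_one htriv.symm
      refine ⟨0, Submodule.zero_mem _, ?_, ?_⟩
      · rw [hφ]
        have : ∑ j : Fin (r + 1), eval₂ C fp ((0 : Fin (r + 1) → MvPolynomial (Fin mm) K) j)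
            * hp j = 0 := by
          apply Finset.sum_eq_zero
          intro j _
          simp
        rw [this, map_zero]
      · apply MvPolynomial.ext
        intro d
        exact Subsingleton.elim _ _
    · haveI : Nontrivial K := ⟨1, 0, htriv⟩
      have hpJ : assemble (n := n) v₀ ∈ J := (hker v₀).mp hv₀
      have hembed0 : (Finsupp.single (zv jr) 1 : Vars n mm r →₀ ℕ)
          = embed (n := n) jr.1 (0 : Fin mm →₀ ℕ) := by
        rw [embed_ne_zero_eq jr.2, Finsupp.mapDomain_zero, add_zero, Subtype.coe_eta]
      have hcd₀ : coeff (Finsupp.single (zv jr) 1) (assemble (n := n) v₀) = 1 := by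
        rw [hembed0, coeff_assemble, hv₀jr]
        simp
      have hp0' : assemble (n := n) v₀ ≠ 0 := by
        intro hzero
        rw [hzero, coeff_zero] at hcd₀
        exact one_ne_zero hcd₀.symm
      have hmemd₀ : (Finsupp.single (zv jr) 1 : Vars n mm r →₀ ℕ)
          ∈ (assemble (n := n) v₀).support := by
        rw [MvPolynomial.mem_support_iff, hcd₀]
        exact one_ne_zero
      have hOnd₀ : OnYZ (Finsupp.single (zv jr) 1 : Vars n mm r →₀ ℕ) := by
        intro i
        simp [Finsupp.single_apply]
      have hlmp : lm mo (assemble (n := n) v₀) = Finsupp.single (zv jr) 1 := by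
        apply lm_eq_of_forall mo hmemd₀
        intro e he
        obtain ⟨hOn, hdeg⟩ := support_assemble he
        obtain ⟨j, t, rfl⟩ := decompose hOn hdeg
        by_cases hj : j = 0
        · subst hj
          apply le_of_lt
          apply hmo₂ _ _ (onYZ_embed _ _) hOnd₀
          rw [degz_embed, if_pos rfl, degz_single_zv]
          omega
        · by_cases hjr2 : (⟨j, hj⟩ : {j : Fin (r + 1) // j ≠ 0}) = jr
          · have hcoe : coeff (embed (n := n) j t) (assemble (n := n) v₀) ≠ 0 :=
              MvPolynomial.mem_support_iff.mp he
            rw [coeff_assemble] at hcoe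
            have hjjr : j = jr.1 := congrArg Subtype.val hjr2
            rw [hjjr, hv₀jr] at hcoe
            have ht0 : t = 0 := by
              by_contra ht
              apply hcoe
              rw [coeff_one, if_neg (fun hh => ht hh.symm)]
            subst ht0
            apply le_of_eq
            congr 1
            rw [hjjr, ← hembed0]
          · apply le_of_lt
            have hlt := hjr ⟨j, hj⟩ hjr2 (t.mapDomain yv) (onYZ_mapDomain t) (degz_mapDomain t)
            rw [embed_ne_zero_eq hj]
            exact hlt
      obtain ⟨c, hcsupp, hcsum⟩ := Submodule.mem_span_set.mp (hB3 _ hpJ hp0')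
      have hex : ∀ f ∈ c.support, ∃ g', g' ∈ B ∧ lt mo g' = f := by
        intro f hf
        obtain ⟨g', hg', hgf⟩ := hcsupp hf
        exact ⟨g', hg', hgf⟩
      choose g hgB hglt using hex
      -- the coefficient identity at the leading monomial
      have hone : ∑ f ∈ c.support.attach,
          (if lm mo (g f.1 f.2) ≤ Finsupp.single (zv jr) 1 then
            coeff (Finsupp.single (zv jr) 1 - lm mo (g f.1 f.2)) (c f.1) *
              coeff (lm mo (g f.1 f.2)) (g f.1 f.2) else 0) = 1 := by
        have e0 := congrArg (fun x => coeff (Finsupp.single (zv jr) 1) x) hcsum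
        rw [lt, hlmp, coeff_monomial, if_pos rfl, hcd₀] at e0
        rw [Finsupp.sum, coeff_sum, ← Finset.sum_attach c.support
          (fun f => coeff (Finsupp.single (zv jr) 1) ((c f) • f))] at e0
        rw [← e0]
        apply Finset.sum_congr rfl
        intro f _
        have e1 : coeff (Finsupp.single (zv jr) 1) ((c f.1) • f.1)
            = coeff (Finsupp.single (zv jr) 1) ((c f.1) * lt mo (g f.1 f.2)) := by
          rw [smul_eq_mul, hglt]
        rw [e1, coeff_mul_lt]
      -- facts about the chosen basis elements
      have hfacts : ∀ (f : MvPolynomial (Vars n mm r) K) (hf : f ∈ c.support),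
          lm mo (g f hf) ≤ Finsupp.single (zv jr) 1 →
          ((if lm mo (g f hf) = 0 then X (zv jr) * g f hf else g f hf) ∈ B' ∧
           assemble (n := n) (vecp (if lm mo (g f hf) = 0 then X (zv jr) * g f hf else g f hf))
             = (if lm mo (g f hf) = 0 then X (zv jr) * g f hf else g f hf) ∧
           (vecp (if lm mo (g f hf) = 0 then X (zv jr) * g f hf else g f hf)) jr.1
             = C (coeff (lm mo (g f hf)) (g f hf))) := by
        intro f hf h
        rcases finsupp_le_single h with h0 | hsing
        · -- `g` is constant
          rw [if_pos h0]
          have hsupp00 : ∀ d ∈ (g f hf).support, d = 0 := by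
            intro d hd
            have hle := le_lm mo hd
            rw [h0, map_zero] at hle
            exact eq_zero_of_syn_le_zero mo hle
          have hsupp0 : ∀ d ∈ (g f hf).support, OnYZ d ∧ degz d = 0 := by
            intro d hd
            rw [hsupp00 d hd]
            exact ⟨fun i => rfl, by simp [degz]⟩
          have hB'mem : X (zv jr) * g f hf ∈ B' := by
            rw [hB']
            exact Or.inr ⟨g f hf, hgB f hf, hsupp0, jr, rfl⟩
          have hsuppX : ∀ d ∈ (X (zv jr) * g f hf).support, OnYZ d ∧ degz d ≤ 1 := by
            intro d hd
            rw [support_X_mul] at hd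
            obtain ⟨d', hd', rfl⟩ := Finset.mem_map.mp hd
            obtain ⟨h1, h2⟩ := hsupp0 d' hd'
            constructor
            · show OnYZ (Finsupp.single (zv jr) 1 + d')
              exact onYZ_add hOnd₀ h1
            · show degz (Finsupp.single (zv jr) 1 + d') ≤ 1
              rw [degz_add, degz_single_zv, h2]
          have hgC : g f hf = C (coeff 0 (g f hf)) := eq_C_of_lm_eq_zero mo h0
          refine ⟨hB'mem, assemble_vecp hsuppX, ?_⟩
          apply MvPolynomial.ext
          intro t
          rw [coeff_vecp, embed_ne_zero_eq jr.2, Subtype.coe_eta, coeff_X_mul]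
          conv_lhs => rw [hgC]
          rw [h0, coeff_C, coeff_C]
          have hiff : (0 : Vars n mm r →₀ ℕ) = t.mapDomain yv ↔ (0 : Fin mm →₀ ℕ) = t := by
            constructor
            · intro hh
              have := Finsupp.mapDomain_injective (yv_injective (n := n) (r := r))
                (by rw [← hh, Finsupp.mapDomain_zero] :
                  Finsupp.mapDomain yv (0 : Fin mm →₀ ℕ) = Finsupp.mapDomain yv t)
              exact this
            · rintro rfl
              rw [Finsupp.mapDomain_zero]
          by_cases ht : (0 : Fin mm →₀ ℕ) = t
          · rw [if_pos (hiff.mpr ht), if_pos ht]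
          · rw [if_neg (fun hh => ht (hiff.mp hh)), if_neg ht]
        · -- the leading monomial of `g` is `z_jr`
          have hlmne : lm mo (g f hf) ≠ 0 := by
            rw [hsing]
            intro hh
            have := congrArg (fun d : Vars n mm r →₀ ℕ => d (zv jr)) hh
            simp at this
          rw [if_neg hlmne]
          have hOnlm : OnYZ (lm mo (g f hf)) := by rw [hsing]; exact hOnd₀
          have hsupp1 : ∀ d ∈ (g f hf).support, OnYZ d ∧ degz d ≤ 1 := by
            intro d hd
            obtain ⟨h1, h2⟩ := support_cond mo hmo₁ hmo₂ hOnlm hd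
            refine ⟨h1, ?_⟩
            rw [hsing, degz_single_zv] at h2
            exact h2
          have hB'mem : g f hf ∈ B' := by
            rw [hB']
            exact Or.inl ⟨hgB f hf, hsupp1⟩
          refine ⟨hB'mem, assemble_vecp hsupp1, ?_⟩
          apply MvPolynomial.ext
          intro t
          rw [coeff_vecp, embed_ne_zero_eq jr.2, Subtype.coe_eta, coeff_C]
          by_cases ht : (0 : Fin mm →₀ ℕ) = t
          · rw [if_pos ht, ← ht, Finsupp.mapDomain_zero, add_zero, ← hsing]
          · rw [if_neg ht]
            by_contra hcoe
            have hmem : Finsupp.single (zv jr) 1 + t.mapDomain yv ∈ (g f hf).support :=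
              MvPolynomial.mem_support_iff.mpr hcoe
            have hle2 := le_lm mo hmem
            rw [hsing] at hle2
            have hmt : (t.mapDomain yv : Vars n mm r →₀ ℕ) ≠ 0 := by
              intro hh
              apply ht
              exact (Finsupp.mapDomain_injective (yv_injective (n := n) (r := r))
                (by rw [hh, Finsupp.mapDomain_zero])).symm
            have hstrict : (Finsupp.single (zv jr) 1 : Vars n mm r →₀ ℕ)
                ≺[mo] Finsupp.single (zv jr) 1 + t.mapDomain yv := by
              apply lt_of_le_of_ne (mo.toSyn_monotone le_self_add)
              intro hEq
              apply hmt
              have := mo.toSyn.injective hEq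
              exact (left_eq_add.mp this)
            exact absurd hle2 (not_le.mpr hstrict)
      -- the witness vector
      refine ⟨∑ f ∈ c.support.attach,
          if lm mo (g f.1 f.2) ≤ Finsupp.single (zv jr) 1 then
            (coeff (Finsupp.single (zv jr) 1 - lm mo (g f.1 f.2)) (c f.1)) •
              vecp (if lm mo (g f.1 f.2) = 0 then X (zv jr) * g f.1 f.2 else g f.1 f.2)
          else 0, ?_, ?_, ?_⟩
      · apply Submodule.sum_mem
        intro f _
        by_cases h : lm mo (g f.1 f.2) ≤ Finsupp.single (zv jr) 1
        · rw [if_pos h]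
          obtain ⟨hB'mem, hav, -⟩ := hfacts f.1 f.2 h
          exact Submodule.smul_mem _ _ (Submodule.subset_span (by
            rw [Set.mem_setOf_eq, hav]; exact hB'mem))
        · rw [if_neg h]
          exact Submodule.zero_mem _
      · rw [hker, assemble_sum]
        apply Ideal.sum_mem
        intro f _
        by_cases h : lm mo (g f.1 f.2) ≤ Finsupp.single (zv jr) 1
        · rw [if_pos h]
          obtain ⟨hB'mem, hav, -⟩ := hfacts f.1 f.2 h
          rw [assemble_smulK, hav, smul_eq_C_mul]
          exact J.mul_mem_left _ (hB'J _ hB'mem)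
        · rw [if_neg h, assemble_zero]
          exact J.zero_mem
      · rw [Finset.sum_apply]
        have hterm : ∀ f ∈ c.support.attach,
            ((if lm mo (g f.1 f.2) ≤ Finsupp.single (zv jr) 1 then
              (coeff (Finsupp.single (zv jr) 1 - lm mo (g f.1 f.2)) (c f.1)) •
                vecp (if lm mo (g f.1 f.2) = 0 then X (zv jr) * g f.1 f.2 else g f.1 f.2)
            else 0) jr.1 : MvPolynomial (Fin mm) K)
            = C (if lm mo (g f.1 f.2) ≤ Finsupp.single (zv jr) 1 then
                coeff (Finsupp.single (zv jr) 1 - lm mo (g f.1 f.2)) (c f.1) *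
                  coeff (lm mo (g f.1 f.2)) (g f.1 f.2) else 0) := by
          intro f _
          by_cases h : lm mo (g f.1 f.2) ≤ Finsupp.single (zv jr) 1
          · rw [if_pos h, if_pos h]
            obtain ⟨-, -, hjr1⟩ := hfacts f.1 f.2 h
            rw [Pi.smul_apply, hjr1, smul_eq_C_mul, ← C_mul]
          · rw [if_neg h, if_neg h, Pi.zero_apply, map_zero]
        rw [Finset.sum_congr rfl hterm, ← map_sum, hone, C_1]

end KernelLemma
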